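/- Let f_θ(x) = W_L φ(W_{L−1} ⋯ φ(W_1 x)) be an L-layer network with ReLU activation φ(z) = max(z,0) applied entrywise, weights θ = (W₁,…,W_L). Let x ∈ ℝ^{n₁} with ‖x‖₂ ≤ B, and let ξ = (U₁,…,U_L) be perturbation matrices satisfying ‖U_l‖₂ ≤ (1/L)‖W_l‖₂ for all l ∈ {1,…,L}, where ‖·‖₂ is the spectral norm. Then ‖f_{θ+ξ}(x) − f_θ(x)‖₂ ≤ e·B·(∏_{l=1}^L ‖W_l‖₂)·Σ_{l=1}^L ‖U_l‖₂/‖W_l‖₂. -/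

import Mathlib

/-- The ReLU network `x ↦ W_{L-1} φ(W_{L-2} ⋯ φ(W_0 x))` evaluated layer by layer:
`reluNet d W x k` is the output after `k` matrix multiplications, with the ReLU
`φ(z) = max(z,0)` applied entrywise between consecutive multiplications. -/
noncomputable def reluNet (d : ℕ → ℕ)
    (W : (l : ℕ) → Matrix (Fin (d (l + 1))) (Fin (d l)) ℝ)
    (x : Fin (d 0) → ℝ) : (k : ℕ) → Fin (d k) → ℝ
  | 0 => x
  | (k + 1) => (W k).mulVec
      (if k = 0 then reluNet d W x k else fun j => max (reluNet d W x k j) 0)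

/-- The spectral (ℓ₂ operator) norm of a matrix. -/
noncomputable def specNorm {p q : ℕ} (A : Matrix (Fin p) (Fin q) ℝ) : ℝ :=
  ‖LinearMap.toContinuousLinearMap (Matrix.toEuclideanLin A)‖

noncomputable def eucNorm {n : ℕ} (v : Fin n → ℝ) : ℝ := Real.sqrt (∑ i, v i ^ 2)

lemma eucNorm_eq {n : ℕ} (v : Fin n → ℝ) :
    eucNorm v = ‖(WithLp.equiv 2 (Fin n → ℝ)).symm v‖ := by
  rw [EuclideanSpace.norm_eq]
  unfold eucNorm
  congr 1
  apply Finset.sum_congr rfl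
  intro i _
  simp [Real.norm_eq_abs, sq_abs]

lemma eucNorm_nonneg {n : ℕ} (v : Fin n → ℝ) : 0 ≤ eucNorm v := Real.sqrt_nonneg _

lemma specNorm_nonneg {p q : ℕ} (A : Matrix (Fin p) (Fin q) ℝ) : 0 ≤ specNorm A :=
  norm_nonneg _

lemma eucNorm_mulVec_le {p q : ℕ} (A : Matrix (Fin p) (Fin q) ℝ) (v : Fin q → ℝ) :
    eucNorm (A.mulVec v) ≤ specNorm A * eucNorm v := by
  rw [eucNorm_eq, eucNorm_eq, WithLp.equiv_symm_apply, ← Matrix.toEuclideanLin_apply_piLp_toLp]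
  exact (LinearMap.toContinuousLinearMap (Matrix.toEuclideanLin A)).le_opNorm _

lemma eucNorm_mono {n : ℕ} {v w : Fin n → ℝ} (h : ∀ i, |v i| ≤ |w i|) :
    eucNorm v ≤ eucNorm w := by
  apply Real.sqrt_le_sqrt
  apply Finset.sum_le_sum
  intro i _
  rw [← sq_abs (v i), ← sq_abs (w i)]
  exact pow_le_pow_left₀ (abs_nonneg _) (h i) 2

lemma eucNorm_add_le {n : ℕ} (v w : Fin n → ℝ) : eucNorm (v + w) ≤ eucNorm v + eucNorm w := by
  rw [eucNorm_eq, eucNorm_eq, eucNorm_eq]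
  exact norm_add_le ((WithLp.equiv 2 (Fin n → ℝ)).symm v) ((WithLp.equiv 2 (Fin n → ℝ)).symm w)

lemma specNorm_add_le {p q : ℕ} (A B : Matrix (Fin p) (Fin q) ℝ) :
    specNorm (A + B) ≤ specNorm A + specNorm B := by
  unfold specNorm
  rw [map_add, map_add]
  exact norm_add_le _ _

/-- activation applied at step k -/
noncomputable def act {n : ℕ} (k : ℕ) (v : Fin n → ℝ) : Fin n → ℝ :=
  if k = 0 then v else fun j => max (v j) 0

lemma reluNet_succ (d : ℕ → ℕ) (W : (l : ℕ) → Matrix (Fin (d (l + 1))) (Fin (d l)) ℝ)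
    (x : Fin (d 0) → ℝ) (k : ℕ) :
    reluNet d W x (k + 1) = (W k).mulVec (act k (reluNet d W x k)) := rfl

lemma eucNorm_act_le {n : ℕ} (k : ℕ) (v : Fin n → ℝ) : eucNorm (act k v) ≤ eucNorm v := by
  unfold act
  split
  · exact le_rfl
  · apply eucNorm_mono
    intro i
    rw [abs_of_nonneg (le_max_right _ _)]
    exact max_le (le_abs_self _) (abs_nonneg _)

lemma eucNorm_act_sub_le {n : ℕ} (k : ℕ) (v w : Fin n → ℝ) :
    eucNorm (act k v - act k w) ≤ eucNorm (v - w) := by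
  unfold act
  split
  · exact le_rfl
  · apply eucNorm_mono
    intro i
    simpa using abs_max_sub_max_le_abs (v i) (w i) 0

lemma reluNet_norm_le (d : ℕ → ℕ) (W : (l : ℕ) → Matrix (Fin (d (l + 1))) (Fin (d l)) ℝ)
    (B : ℝ) (x : Fin (d 0) → ℝ) (hx : eucNorm x ≤ B) (k : ℕ) :
    eucNorm (reluNet d W x k) ≤ B * ∏ l ∈ Finset.range k, specNorm (W l) := by
  induction k with
  | zero => simpa [reluNet] using hx
  | succ k ih =>
    have hB : 0 ≤ B := le_trans (eucNorm_nonneg x) hx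
    rw [reluNet_succ, Finset.prod_range_succ]
    calc eucNorm ((W k).mulVec (act k (reluNet d W x k)))
        ≤ specNorm (W k) * eucNorm (act k (reluNet d W x k)) := eucNorm_mulVec_le _ _
      _ ≤ specNorm (W k) * (B * ∏ l ∈ Finset.range k, specNorm (W l)) := by
          apply mul_le_mul_of_nonneg_left _ (specNorm_nonneg _)
          exact le_trans (eucNorm_act_le _ _) ih
      _ = B * ((∏ l ∈ Finset.range k, specNorm (W l)) * specNorm (W k)) := by ring

set_option maxHeartbeats 1000000

lemma key_bound (L : ℕ) (hL : 1 ≤ L) (d : ℕ → ℕ)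
    (W U : (l : ℕ) → Matrix (Fin (d (l + 1))) (Fin (d l)) ℝ)
    (B : ℝ) (x : Fin (d 0) → ℝ) (hx : eucNorm x ≤ B)
    (hU : ∀ l < L, specNorm (U l) ≤ (1 / (L : ℝ)) * specNorm (W l)) :
    ∀ k ≤ L, eucNorm (reluNet d (fun l => W l + U l) x k - reluNet d W x k) ≤
      (1 + 1 / (L : ℝ)) ^ k * B * (∏ l ∈ Finset.range k, specNorm (W l)) *
        ∑ l ∈ Finset.range k, specNorm (U l) / specNorm (W l) := by
  have hB : 0 ≤ B := le_trans (eucNorm_nonneg x) hx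
  have ht : (1 : ℝ) ≤ 1 + 1 / (L : ℝ) := by
    have : (0 : ℝ) ≤ 1 / (L : ℝ) := by positivity
    linarith
  intro k hk
  induction k with
  | zero =>
    simp only [reluNet, sub_self, Finset.range_zero, Finset.sum_empty, mul_zero]
    simp [eucNorm]
  | succ k ih =>
    have hkL : k < L := hk
    have ihk := ih (le_of_lt hkL)
    set F := reluNet d (fun l => W l + U l) x with hFdef
    set G := reluNet d W x with hGdef
    set wk := specNorm (W k) with hwk
    set uk := specNorm (U k) with huk
    have hw : 0 ≤ wk := specNorm_nonneg _
    have hu : 0 ≤ uk := specNorm_nonneg _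
    have huwL : uk ≤ (1 / (L : ℝ)) * wk := hU k hkL
    have hsplit : F (k + 1) - G (k + 1) =
        (W k + U k).mulVec (act k (F k) - act k (G k)) + (U k).mulVec (act k (G k)) := by
      rw [hFdef, hGdef, reluNet_succ, reluNet_succ]
      simp only [Matrix.mulVec_sub, Matrix.add_mulVec]
      abel
    set P := ∏ l ∈ Finset.range k, specNorm (W l) with hP
    set S := ∑ l ∈ Finset.range k, specNorm (U l) / specNorm (W l) with hS
    have hPn : 0 ≤ P := Finset.prod_nonneg fun l _ => specNorm_nonneg _
    have hSn : 0 ≤ S :=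
      Finset.sum_nonneg fun l _ => div_nonneg (specNorm_nonneg _) (specNorm_nonneg _)
    set t := 1 + 1 / (L : ℝ) with htdef
    have hGb : eucNorm (G k) ≤ B * P := reluNet_norm_le d W B x hx k
    have step1 : eucNorm (F (k + 1) - G (k + 1)) ≤
        (t * wk) * eucNorm (F k - G k) + uk * (B * P) := by
      rw [hsplit]
      calc eucNorm ((W k + U k).mulVec (act k (F k) - act k (G k)) + (U k).mulVec (act k (G k)))
          ≤ eucNorm ((W k + U k).mulVec (act k (F k) - act k (G k))) +
            eucNorm ((U k).mulVec (act k (G k))) := eucNorm_add_le _ _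
        _ ≤ specNorm (W k + U k) * eucNorm (act k (F k) - act k (G k)) +
            specNorm (U k) * eucNorm (act k (G k)) :=
            add_le_add (eucNorm_mulVec_le _ _) (eucNorm_mulVec_le _ _)
        _ ≤ (t * wk) * eucNorm (F k - G k) + uk * (B * P) := by
            apply add_le_add
            · apply mul_le_mul
              · calc specNorm (W k + U k) ≤ wk + uk := specNorm_add_le _ _
                  _ ≤ wk + (1 / (L : ℝ)) * wk := by linarith
                  _ = t * wk := by ring
              · exact eucNorm_act_sub_le _ _ _
              · exact eucNorm_nonneg _
              · exact mul_nonneg (by linarith) hw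
            · exact mul_le_mul_of_nonneg_left
                (le_trans (eucNorm_act_le _ _) hGb) hu
    have huw : uk ≤ wk * (uk / wk) := by
      rcases eq_or_lt_of_le hw with h0 | h0
      · have hL0 : (0 : ℝ) < L := by exact_mod_cast hL
        have : uk ≤ 0 := by
          rw [← h0] at huwL
          simpa using huwL
        have : uk = 0 := le_antisymm this hu
        simp [this]
      · rw [mul_div_cancel₀ _ (ne_of_gt h0)]
    have hA : (1 : ℝ) ≤ t ^ k := one_le_pow₀ ht
    have hAt : (1 : ℝ) ≤ t ^ k * t := by
      calc (1 : ℝ) = 1 * 1 := by ring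
        _ ≤ t ^ k * t := mul_le_mul hA ht zero_le_one (by linarith)
    calc eucNorm (F (k + 1) - G (k + 1))
        ≤ (t * wk) * eucNorm (F k - G k) + uk * (B * P) := step1
      _ ≤ (t * wk) * (t ^ k * B * P * S) + uk * (B * P) := by
          apply add_le_add_left
          exact mul_le_mul_of_nonneg_left ihk (mul_nonneg (by linarith) hw)
      _ ≤ t ^ (k + 1) * B * (P * wk) * (S + uk / wk) := by
          rw [pow_succ]
          have h2 : uk * (B * P) ≤ (t ^ k * t) * (B * P) * (wk * (uk / wk)) := by
            calc uk * (B * P) ≤ (wk * (uk / wk)) * (B * P) :=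
                  mul_le_mul_of_nonneg_right huw (mul_nonneg hB hPn)
              _ = 1 * ((B * P) * (wk * (uk / wk))) := by ring
              _ ≤ (t ^ k * t) * ((B * P) * (wk * (uk / wk))) := by
                  refine mul_le_mul_of_nonneg_right hAt ?_
                  exact mul_nonneg (mul_nonneg hB hPn) (mul_nonneg hw (div_nonneg hu hw))
              _ = (t ^ k * t) * (B * P) * (wk * (uk / wk)) := by ring
          nlinarith [h2]
      _ = t ^ (k + 1) * B * (∏ l ∈ Finset.range (k + 1), specNorm (W l)) *
            ∑ l ∈ Finset.range (k + 1), specNorm (U l) / specNorm (W l) := by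
          rw [Finset.prod_range_succ, Finset.sum_range_succ]

/-- Lemma (Neyshabur et al.): perturbation bound for ReLU networks. If `‖x‖₂ ≤ B` and
the perturbations satisfy `‖U_l‖₂ ≤ ‖W_l‖₂/L` for every layer, then
`‖f_{θ+ξ}(x) − f_θ(x)‖₂ ≤ e·B·(∏_l ‖W_l‖₂)·Σ_l ‖U_l‖₂/‖W_l‖₂`. -/
theorem relu_net_perturbation_bound
    (L : ℕ) (hL : 1 ≤ L) (d : ℕ → ℕ)
    (W U : (l : ℕ) → Matrix (Fin (d (l + 1))) (Fin (d l)) ℝ)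
    (B : ℝ) (x : Fin (d 0) → ℝ)
    (hx : Real.sqrt (∑ i, x i ^ 2) ≤ B)
    (hU : ∀ l < L, specNorm (U l) ≤ (1 / (L : ℝ)) * specNorm (W l)) :
    Real.sqrt (∑ i, (reluNet d (fun l => W l + U l) x L i - reluNet d W x L i) ^ 2) ≤
      Real.exp 1 * B * (∏ l ∈ Finset.range L, specNorm (W l)) *
        ∑ l ∈ Finset.range L, specNorm (U l) / specNorm (W l) := by
  have hx' : eucNorm x ≤ B := hx
  have hB : 0 ≤ B := le_trans (eucNorm_nonneg x) hx'
  have hkey := key_bound L hL d W U B x hx' hU L le_rfl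
  set F := reluNet d (fun l => W l + U l) x L with hF
  set G := reluNet d W x L with hG
  have hLHS : Real.sqrt (∑ i, (F i - G i) ^ 2) = eucNorm (F - G) := by
    unfold eucNorm
    congr 1
  rw [hLHS]
  refine le_trans hkey ?_
  have hL0 : (0 : ℝ) < L := by exact_mod_cast hL
  have hpow : (1 + 1 / (L : ℝ)) ^ L ≤ Real.exp 1 := by
    have h1 : 1 + 1 / (L : ℝ) ≤ Real.exp (1 / (L : ℝ)) := by
      have := Real.add_one_le_exp (1 / (L : ℝ))
      linarith
    have h2 : (1 + 1 / (L : ℝ)) ^ L ≤ (Real.exp (1 / (L : ℝ))) ^ L := by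
      apply pow_le_pow_left₀ (by positivity) h1
    calc (1 + 1 / (L : ℝ)) ^ L ≤ (Real.exp (1 / (L : ℝ))) ^ L := h2
      _ = Real.exp ((L : ℝ) * (1 / (L : ℝ))) := by rw [← Real.exp_nat_mul]
      _ = Real.exp 1 := by rw [mul_one_div, div_self (ne_of_gt hL0)]
  have hPn : 0 ≤ ∏ l ∈ Finset.range L, specNorm (W l) :=
    Finset.prod_nonneg fun l _ => specNorm_nonneg _
  have hSn : 0 ≤ ∑ l ∈ Finset.range L, specNorm (U l) / specNorm (W l) :=
    Finset.sum_nonneg fun l _ => div_nonneg (specNorm_nonneg _) (specNorm_nonneg _)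
  have : (1 + 1 / (L : ℝ)) ^ L * B ≤ Real.exp 1 * B :=
    mul_le_mul_of_nonneg_right hpow hB
  apply mul_le_mul_of_nonneg_right _ hSn
  exact mul_le_mul_of_nonneg_right this hPn
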